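/- Let u, v be elements of an algebra with c := [u,v]/(q-q^{-1}) satisfying uc = q^2 cu and cv = q^2 vc. Then, as formal power series, Ψ^q(v)^{-1} u Ψ^q(v) = u + c and Ψ^q(u) v Ψ^q(u)^{-1} = v + c. -/

import Mathlib

/- STATEMENT 2: generalized quantum dilogarithm conjugation.
With `c := [u,v]/(q-q⁻¹)` satisfying `uc = q²cu` and `cv = q²vc`, we have
`Ψ^q(v)⁻¹ u Ψ^q(v) = u + c` and `Ψ^q(u) v Ψ^q(u)⁻¹ = v + c`, as formal power
series (the formal variable of `PowerSeries A` tracks the power of the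
dilogarithm argument; `c` contains that argument once, hence appears in degree 1).
Both identities are stated in the equivalent inverse-free form. -/

noncomputable section

/-- The field `ℂ(q)` of rational functions, with `q` the formal parameter. -/
abbrev Kq : Type := RatFunc ℂ

/-- The formal parameter `q`. -/
def qq : Kq := RatFunc.X

/-- Coefficient of `x^k` in `Ψ^q(x) = ∏_{r≥0}(1+q^{2r+1}x)⁻¹`. -/
def psiCoeff (k : ℕ) : Kq :=
  (-qq) ^ k / ∏ j ∈ Finset.range k, (1 - qq ^ (2 * (j + 1)))

/-- The quantum dilogarithm `Ψ^q(x)` of an algebra element `x`, as a formal power series. -/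
def Psi {A : Type} [Ring A] [Algebra Kq A] (x : A) : PowerSeries A :=
  PowerSeries.mk fun k => psiCoeff k • x ^ k

/-! ### Auxiliary lemmas -/

lemma qq_ne_zero : qq ≠ 0 := RatFunc.X_ne_zero

lemma qq_pow_ne_one {m : ℕ} (hm : 1 ≤ m) : qq ^ m ≠ 1 := by
  intro h
  have : (algebraMap (Polynomial ℂ) Kq) (Polynomial.X ^ m) = algebraMap (Polynomial ℂ) Kq 1 := by
    simpa [map_pow, qq] using h
  have h2 := RatFunc.algebraMap_injective ℂ this
  have := congrArg Polynomial.natDegree h2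
  simp [Polynomial.natDegree_X_pow] at this
  omega

lemma fac_ne_zero (j : ℕ) : (1 : Kq) - qq ^ (2 * (j + 1)) ≠ 0 :=
  sub_ne_zero.mpr (Ne.symm (qq_pow_ne_one (by omega)))

lemma prod_ne_zero (k : ℕ) : (∏ j ∈ Finset.range k, (1 - qq ^ (2 * (j + 1)))) ≠ 0 :=
  Finset.prod_ne_zero_iff.mpr fun j _ => fac_ne_zero j

lemma psiCoeff_rec (k : ℕ) :
    psiCoeff (k + 1) * (qq⁻¹ * (qq ^ (2 * (k + 1)) - 1)) = psiCoeff k := by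
  unfold psiCoeff
  rw [Finset.prod_range_succ]
  have h1 := prod_ne_zero k
  have h2 := fac_ne_zero k
  have h0 := qq_ne_zero
  field_simp
  ring

section alg
variable {A : Type} [Ring A] [Algebra Kq A] (u v c : A)

lemma comm_base (hc : c = (qq - qq⁻¹)⁻¹ • (u * v - v * u)) :
    u * v = v * u + (qq⁻¹ * (qq ^ 2 - 1)) • c := by
  have hne : qq - qq⁻¹ ≠ 0 := by
    intro h
    exact qq_pow_ne_one (m := 2) (by omega)
      (by rw [sq]; nth_rewrite 2 [sub_eq_zero.mp h]; exact mul_inv_cancel₀ qq_ne_zero)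
  have key : (qq - qq⁻¹) • c = u * v - v * u := by
    rw [hc, smul_smul, mul_inv_cancel₀ hne, one_smul]
  have hq : qq⁻¹ * (qq ^ 2 - 1) = qq - qq⁻¹ := by
    rw [mul_sub, mul_one, sq, ← mul_assoc, inv_mul_cancel₀ qq_ne_zero, one_mul]
  rw [hq, key]; abel

lemma comm_v (hc : c = (qq - qq⁻¹)⁻¹ • (u * v - v * u))
    (hcv : c * v = (qq ^ 2) • (v * c)) (k : ℕ) :
    u * v ^ (k + 1) = v ^ (k + 1) * u + (qq⁻¹ * (qq ^ (2 * (k + 1)) - 1)) • (v ^ k * c) := by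
  induction k with
  | zero => simpa using comm_base u v c hc
  | succ k ih =>
      have e1 : u * v ^ (k + 2) = (u * v ^ (k + 1)) * v := by rw [mul_assoc, ← pow_succ]
      rw [e1, ih, add_mul, smul_mul_assoc, mul_assoc (v ^ (k + 1)) u v,
        comm_base u v c hc, mul_assoc (v ^ k) c v, hcv, mul_add,
        ← mul_assoc (v ^ (k + 1)) v u, ← pow_succ,
        mul_smul_comm, mul_smul_comm, smul_smul,
        ← mul_assoc (v ^ k) v c, ← pow_succ, add_assoc, ← add_smul]
      congr 2
      have h0 := qq_ne_zero
      field_simp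
      ring

lemma comm_u (hc : c = (qq - qq⁻¹)⁻¹ • (u * v - v * u))
    (huc : u * c = (qq ^ 2) • (c * u)) (k : ℕ) :
    u ^ (k + 1) * v = v * u ^ (k + 1) + (qq⁻¹ * (qq ^ (2 * (k + 1)) - 1)) • (c * u ^ k) := by
  induction k with
  | zero => simpa using comm_base u v c hc
  | succ k ih =>
      have e1 : u ^ (k + 2) * v = u * (u ^ (k + 1) * v) := by rw [← mul_assoc, ← pow_succ']
      rw [e1, ih, mul_add, mul_smul_comm, ← mul_assoc u c, huc, smul_mul_assoc,
        ← mul_assoc u v, comm_base u v c hc, add_mul, mul_assoc v u, ← pow_succ',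
        smul_mul_assoc, smul_smul, mul_assoc c u, ← pow_succ',
        add_assoc, ← add_smul]
      congr 2
      have h0 := qq_ne_zero
      field_simp
      ring
end alg

/-- Generalized conjugation identity: `Ψ^q(v)⁻¹ u Ψ^q(v) = u + c` and
`Ψ^q(u) v Ψ^q(u)⁻¹ = v + c` where `c = (uv - vu)/(q - q⁻¹)`. -/
theorem quantum_dilogarithm_generalized_conjugation {A : Type} [Ring A] [Algebra Kq A]
    (u v : A)
    (c : A) (hc : c = (qq - qq⁻¹)⁻¹ • (u * v - v * u))
    (huc : u * c = (qq ^ 2) • (c * u))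
    (hcv : c * v = (qq ^ 2) • (v * c)) :
    ((PowerSeries.C (R := A)) u) * Psi v
        = Psi v * ((PowerSeries.C (R := A)) u + PowerSeries.X * (PowerSeries.C (R := A)) c) ∧
    Psi u * ((PowerSeries.C (R := A)) v)
        = ((PowerSeries.C (R := A)) v + PowerSeries.X * (PowerSeries.C (R := A)) c) * Psi u := by
  constructor
  · ext n
    rw [PowerSeries.coeff_C_mul, mul_add, map_add, PowerSeries.coeff_mul_C,
      ← (PowerSeries.commute_X (PowerSeries.C (R := A) c)).eq, ← mul_assoc]
    cases n with
    | zero =>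
        simp [Psi, psiCoeff]
    | succ k =>
        rw [PowerSeries.coeff_succ_mul_X, PowerSeries.coeff_mul_C]
        simp only [Psi, PowerSeries.coeff_mk]
        rw [mul_smul_comm, comm_v u v c hc hcv k, smul_add, smul_smul,
          psiCoeff_rec, smul_mul_assoc, smul_mul_assoc]
  · ext n
    rw [PowerSeries.coeff_mul_C, add_mul, map_add, PowerSeries.coeff_C_mul, mul_assoc]
    cases n with
    | zero =>
        rw [PowerSeries.coeff_zero_X_mul]
        simp [Psi, psiCoeff]
    | succ k =>
        rw [PowerSeries.coeff_succ_X_mul, PowerSeries.coeff_C_mul]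
        simp only [Psi, PowerSeries.coeff_mk]
        rw [smul_mul_assoc, comm_u u v c hc huc k, smul_add, smul_smul,
          psiCoeff_rec, mul_smul_comm, mul_smul_comm]

end
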